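/- The leximax extension of a linear order on candidates satisfies fixed-cardinality responsiveness: if X ⪰_lmax Y for k-element sets X, Y and Z is disjoint from X and Y, then X ∪ Z ⪰_lmax Y ∪ Z. -/

import Mathlib

/-- The decreasing list of the elements of a finite set. -/
def descList {C : Type*} [LinearOrder C] (X : Finset C) : List C :=
  (X.sort (· ≤ ·)).reverse

/-- Leximax comparison of committees: either the decreasing lists agree, or at
the first index where they differ the element of `X` is preferred. -/
def leximax {C : Type*} [LinearOrder C] (X Y : Finset C) : Prop :=
  descList X = descList Y ∨ List.Lex (· < ·) (descList Y) (descList X)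

lemma lex_orderedInsert {C : Type*} [LinearOrder C] (z : C) :
    ∀ {l₁ l₂ : List C}, List.Lex (· < ·) l₂ l₁ →
      List.Lex (· < ·) (List.orderedInsert (· ≥ ·) z l₂)
        (List.orderedInsert (· ≥ ·) z l₁) := by
  intro l₁ l₂ h
  induction h with
  | nil =>
    rename_i a t
    simp only [List.orderedInsert, List.orderedInsert_nil]
    split_ifs with hz
    · exact List.Lex.cons List.Lex.nil
    · exact List.Lex.rel (lt_of_not_ge hz)
  | @cons a t₂ t₁ ht ih =>
    simp only [List.orderedInsert]
    split_ifs with hz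
    · exact List.Lex.cons (List.Lex.cons ht)
    · exact List.Lex.cons ih
  | @rel a t₂ b t₁ hab =>
    simp only [List.orderedInsert]
    split_ifs with h1 h2 h2
    · -- z ≥ a, z ≥ b
      exact List.Lex.cons (List.Lex.rel hab)
    · exact List.Lex.rel (lt_of_not_ge h2)
    · exact absurd (hab.trans_le h2).le h1
    · exact List.Lex.rel hab

lemma descList_sorted {C : Type*} [LinearOrder C] (X : Finset C) :
    (descList X).Pairwise (· ≥ ·) := by
  have := X.pairwise_sort (· ≤ ·)
  exact List.pairwise_reverse.2 (this.imp fun h => h)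

lemma descList_insert {C : Type*} [LinearOrder C] (X : Finset C) (z : C) (hz : z ∉ X) :
    descList (insert z X) = List.orderedInsert (· ≥ ·) z (descList X) := by
  refine List.Perm.eq_of_pairwise' (descList_sorted _)
    (List.Pairwise.orderedInsert _ _ (descList_sorted X)) ?_
  have h1 : List.Perm (descList (insert z X)) (insert z X).toList :=
    (List.reverse_perm _).trans (Finset.sort_perm_toList _ _)
  have h2 : List.Perm (insert z X).toList (z :: X.toList) := Finset.toList_insert hz
  have h3 : List.Perm (z :: X.toList : List C) (z :: descList X) :=
    List.Perm.cons _ ((Finset.sort_perm_toList _ _).symm.trans (List.reverse_perm _).symm)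
  exact ((h1.trans h2).trans h3).trans (List.perm_orderedInsert _ _ _).symm

/-- The leximax set extension satisfies fixed-cardinality responsiveness. -/
theorem stmt_2 {C : Type*} [LinearOrder C] (k : ℕ) (X Y Z : Finset C)
    (hX : X.card = k) (hY : Y.card = k)
    (hZX : Disjoint Z X) (hZY : Disjoint Z Y)
    (h : leximax X Y) :
    leximax (X ∪ Z) (Y ∪ Z) := by
  rcases h with h | h
  · left
    have : X = Y := by
      have := congrArg List.reverse h
      simp only [descList, List.reverse_reverse] at this
      apply Finset.ext
      intro a
      rw [← Finset.mem_sort (α := C) (· ≤ ·), this, Finset.mem_sort]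
    rw [this]
  · right
    induction Z using Finset.induction with
    | empty => simpa using h
    | @insert z Z hzZ ih =>
      have hzX : z ∉ X := fun hx => (Finset.disjoint_left.mp hZX (Finset.mem_insert_self z Z)) hx
      have hzY : z ∉ Y := fun hy => (Finset.disjoint_left.mp hZY (Finset.mem_insert_self z Z)) hy
      have hZX' : Disjoint Z X := Finset.disjoint_of_subset_left (Finset.subset_insert z Z) hZX
      have hZY' : Disjoint Z Y := Finset.disjoint_of_subset_left (Finset.subset_insert z Z) hZY
      have hzXZ : z ∉ X ∪ Z := by
        simp [hzX, hzZ]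
      have hzYZ : z ∉ Y ∪ Z := by
        simp [hzY, hzZ]
      have e1 : X ∪ insert z Z = insert z (X ∪ Z) := by
        ext a; simp [or_comm, or_left_comm, or_assoc]
      have e2 : Y ∪ insert z Z = insert z (Y ∪ Z) := by
        ext a; simp [or_comm, or_left_comm, or_assoc]
      rw [e1, e2, descList_insert _ _ hzXZ, descList_insert _ _ hzYZ]
      exact lex_orderedInsert z (ih hZX' hZY')
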